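/- For every real b with 0 < b < 1 there exists a constant C > 0 (depending only on b) such that for every real μ ≥ 1 and every integer n ≥ 1: Σ_{k=1}^{n} Π_{i=1}^{k} ((b·i + μ)/i) ≤ exp(C·μ·log(μ+1)). -/

import Mathlib

/-- **Core quantitative estimate of Theorem 4.**
For every `0 < b < 1` there is a constant `C > 0` (depending only on `b`) such that for
every real `μ ≥ 1` and every integer `n ≥ 1`,
`∑_{k=1}^{n} ∏_{i=1}^{k} (b·i + μ)/i ≤ exp(C·μ·log(μ+1))`. -/
theorem stmt8 (b : ℝ) (hb0 : 0 < b) (hb1 : b < 1) :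
    ∃ C : ℝ, 0 < C ∧ ∀ μ : ℝ, 1 ≤ μ → ∀ n : ℕ, 1 ≤ n →
      ∑ k ∈ Finset.Icc 1 n, ∏ i ∈ Finset.Icc 1 k, ((b * i + μ) / i) ≤
        Real.exp (C * μ * Real.log (μ + 1)) := by
  have h1b : 0 < 1 - b := by linarith
  set r : ℝ := (1 + b) / 2 with hrdef
  have hr0 : 0 < r := by rw [hrdef]; linarith
  have hrb : b < r := by rw [hrdef]; linarith
  have hr1 : r < 1 := by rw [hrdef]; linarith
  have hrhalf : (1:ℝ)/2 < r := by rw [hrdef]; linarith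
  have hlog2 : 0 < Real.log 2 := Real.log_pos (by norm_num)
  set c1 : ℝ := 2 / (1 - b) + 1 with hc1def
  have hc1 : 0 < c1 := by positivity
  set L : ℝ := Real.log (2 / (1 - b)) with hLdef
  have hL : 0 ≤ L := Real.log_nonneg (by rw [le_div_iff₀ h1b]; linarith)
  refine ⟨c1 + (c1 + L) / Real.log 2,
    add_pos hc1 (div_pos (by linarith) hlog2), ?_⟩
  intro μ hμ n hn
  set M : ℕ := ⌈2 * μ / (1 - b)⌉₊ with hMdef
  have hμ0 : 0 < μ := by linarith
  have hM0 : (0:ℝ) ≤ (M:ℝ) := Nat.cast_nonneg M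
  have hMge : 2 * μ / (1 - b) ≤ (M:ℝ) := Nat.le_ceil _
  have hMle : (M:ℝ) ≤ c1 * μ := by
    have h := Nat.ceil_lt_add_one (a := 2 * μ / (1 - b)) (by positivity)
    have h2 : 2 * μ / (1 - b) = 2 / (1 - b) * μ := by ring
    rw [hc1def]
    nlinarith [h]
  have hμ1 : (1:ℝ) ≤ μ + 1 := by linarith
  -- factor bounds
  have hfpos : ∀ i : ℕ, 0 ≤ (b * i + μ) / i := by
    intro i; positivity
  have hf1 : ∀ i : ℕ, 1 ≤ i → (b * i + μ) / i ≤ μ + 1 := by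
    intro i hi
    have hi' : (1:ℝ) ≤ i := by exact_mod_cast hi
    rw [div_le_iff₀ (by linarith)]
    nlinarith
  have hf2 : ∀ i : ℕ, M + 1 ≤ i → (b * i + μ) / i ≤ r := by
    intro i hi
    have hi' : (M:ℝ) + 1 ≤ i := by exact_mod_cast hi
    have hipos : (0:ℝ) < i := by linarith
    rw [div_le_iff₀ hipos]
    have h1 : 2 * μ / (1 - b) ≤ (i:ℝ) := by linarith
    have h2 : 2 * μ ≤ (1 - b) * i := by
      rw [div_le_iff₀ h1b] at h1; linarith
    rw [hrdef]; nlinarith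
  -- key claim by induction
  have claim : ∀ k : ℕ, ∏ i ∈ Finset.Icc 1 k, ((b * i + μ) / i) ≤
      (μ + 1) ^ (min k M) * r ^ (k - M) := by
    intro k
    induction k with
    | zero => simp
    | succ k ih =>
      rw [Finset.prod_Icc_succ_top (Nat.le_add_left 1 k)]
      by_cases hkM : k < M
      · have hmin : min (k+1) M = k+1 := min_eq_left hkM
        have hmin' : min k M = k := min_eq_left (Nat.le_of_lt hkM)
        have hsub : k + 1 - M = 0 := by omega
        have hsub' : k - M = 0 := by omega
        rw [hmin, hsub, pow_zero, mul_one]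
        rw [hmin', hsub', pow_zero, mul_one] at ih
        calc (∏ i ∈ Finset.Icc 1 k, ((b * i + μ) / i)) * ((b * (k+1:ℕ) + μ) / (k+1:ℕ))
            ≤ (μ + 1) ^ k * (μ + 1) :=
              mul_le_mul ih (hf1 (k+1) (Nat.le_add_left 1 k)) (hfpos (k+1)) (by positivity)
          _ = (μ + 1) ^ (k+1) := (pow_succ _ _).symm
      · have hMk : M ≤ k := Nat.le_of_not_lt hkM
        have hmin : min (k+1) M = M := min_eq_right (by omega)
        have hmin' : min k M = M := min_eq_right hMk
        have hsub : k + 1 - M = (k - M) + 1 := by omega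
        rw [hmin, hsub, pow_succ, ← mul_assoc]
        rw [hmin'] at ih
        exact mul_le_mul ih (hf2 (k+1) (by omega)) (hfpos (k+1)) (by positivity)
  -- termwise bound
  have hterm : ∀ k ∈ Finset.Icc 1 n, ∏ i ∈ Finset.Icc 1 k, ((b * i + μ) / i) ≤
      (μ + 1) ^ M * ((1/r) ^ M * r ^ k) := by
    intro k _
    refine le_trans (claim k) ?_
    have h1 : (μ + 1) ^ (min k M) ≤ (μ + 1) ^ M :=
      pow_le_pow_right₀ hμ1 (min_le_right k M)
    have h2 : r ^ (k - M) ≤ (1/r) ^ M * r ^ k := by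
      have hrM : (0:ℝ) < r ^ M := pow_pos hr0 M
      rw [one_div, inv_pow, mul_comm, ← div_eq_mul_inv, le_div_iff₀ hrM, ← pow_add]
      exact pow_le_pow_of_le_one (le_of_lt hr0) (le_of_lt hr1) (by omega)
    exact mul_le_mul h1 h2 (by positivity) (by positivity)
  -- geometric sum bound
  have hgeom : ∑ k ∈ Finset.Icc 1 n, r ^ k ≤ 1 / (1 - r) := by
    calc ∑ k ∈ Finset.Icc 1 n, r ^ k ≤ ∑ k ∈ Finset.range (n+1), r ^ k := by
          refine Finset.sum_le_sum_of_subset_of_nonneg ?_ (fun i _ _ => by positivity)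
          intro i hi
          simp only [Finset.mem_Icc] at hi
          simp only [Finset.mem_range]; omega
      _ ≤ ∑' k : ℕ, r ^ k :=
          Summable.sum_le_tsum _ (fun i _ => by positivity)
            (summable_geometric_of_lt_one (le_of_lt hr0) hr1)
      _ = (1 - r)⁻¹ := tsum_geometric_of_lt_one (le_of_lt hr0) hr1
      _ = 1 / (1 - r) := (one_div _).symm
  have hsum : ∑ k ∈ Finset.Icc 1 n, ∏ i ∈ Finset.Icc 1 k, ((b * i + μ) / i) ≤
      (μ + 1) ^ M * ((1/r) ^ M * (1 / (1 - r))) := by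
    calc ∑ k ∈ Finset.Icc 1 n, ∏ i ∈ Finset.Icc 1 k, ((b * i + μ) / i)
        ≤ ∑ k ∈ Finset.Icc 1 n, (μ + 1) ^ M * ((1/r) ^ M * r ^ k) :=
          Finset.sum_le_sum hterm
      _ = (μ + 1) ^ M * ((1/r) ^ M * ∑ k ∈ Finset.Icc 1 n, r ^ k) := by
          rw [← Finset.mul_sum]
          congr 1
          rw [← Finset.mul_sum]
      _ ≤ (μ + 1) ^ M * ((1/r) ^ M * (1 / (1 - r))) := by
          have h1r : 0 < 1 - r := by linarith
          gcongr
  -- rewrite RHS as an exponential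
  have h1r : 0 < 1 - r := by linarith
  have hrw : (μ + 1) ^ M * ((1/r) ^ M * (1 / (1 - r))) =
      Real.exp ((M:ℝ) * Real.log (μ + 1) + ((M:ℝ) * Real.log (1/r) + Real.log (1 / (1 - r)))) := by
    rw [Real.exp_add, Real.exp_add, Real.exp_nat_mul, Real.exp_nat_mul,
      Real.exp_log (by linarith : (0:ℝ) < μ + 1),
      Real.exp_log (by positivity : (0:ℝ) < 1/r),
      Real.exp_log (by positivity : (0:ℝ) < 1/(1-r))]
  refine le_trans hsum ?_
  rw [hrw, Real.exp_le_exp]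
  -- bound the exponent
  have hlogμ : Real.log 2 ≤ Real.log (μ + 1) := Real.log_le_log (by norm_num) (by linarith)
  have hlogμ0 : 0 ≤ Real.log (μ + 1) := le_trans (le_of_lt hlog2) hlogμ
  have hlogr0 : 0 ≤ Real.log (1/r) := Real.log_nonneg (by rw [le_div_iff₀ hr0]; linarith)
  have hlogr1 : Real.log (1/r) ≤ 1 := by
    have h1 : Real.log (1/r) ≤ Real.log 2 :=
      Real.log_le_log (by positivity) (by rw [div_le_iff₀ hr0]; linarith)
    have h2 : Real.log 2 ≤ 2 - 1 := Real.log_le_sub_one_of_pos (by norm_num)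
    linarith
  have hLrw : Real.log (1 / (1 - r)) = L := by
    have h : (1:ℝ) - r = (1 - b) / 2 := by rw [hrdef]; ring
    rw [hLdef, h, one_div_div]
  rw [hLrw]
  have e1 : (M:ℝ) * Real.log (μ + 1) ≤ c1 * μ * Real.log (μ + 1) :=
    mul_le_mul_of_nonneg_right hMle hlogμ0
  have e2 : (M:ℝ) * Real.log (1/r) ≤ c1 * μ := by
    have h := mul_le_mul_of_nonneg_left hlogr1 hM0
    rw [mul_one] at h
    exact h.trans hMle
  have e3 : c1 * μ + L ≤ (c1 + L) * μ := by
    have h := mul_le_mul_of_nonneg_left hμ hL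
    rw [mul_one] at h
    have heq : (c1 + L) * μ = c1 * μ + L * μ := by ring
    linarith
  have e4 : (c1 + L) * μ ≤ (c1 + L) / Real.log 2 * (μ * Real.log (μ + 1)) := by
    rw [div_mul_eq_mul_div, le_div_iff₀ hlog2]
    have hcL : (0:ℝ) ≤ (c1 + L) * μ := by positivity
    have h := mul_le_mul_of_nonneg_left hlogμ hcL
    have heq : (c1 + L) * (μ * Real.log (μ + 1)) = (c1 + L) * μ * Real.log (μ + 1) := by ring
    linarith
  calc (M:ℝ) * Real.log (μ + 1) + ((M:ℝ) * Real.log (1/r) + L)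
      ≤ c1 * μ * Real.log (μ + 1) + (c1 + L) / Real.log 2 * (μ * Real.log (μ + 1)) :=
        add_le_add e1 ((add_le_add_left e2 L).trans (e3.trans e4))
    _ = (c1 + (c1 + L) / Real.log 2) * μ * Real.log (μ + 1) := by ring
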